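/- Let (r,m) be a point with Pr(ℛ(K(r,m))) > 0. Then Pr^Elga_{(r,m)} is the unique probability measure Pr' on the points of K(r,m) satisfying the following proportionality condition: for all points (r₁,m₁), (r₂,m₂) ∈ K(r,m), if Pr({r₂}) > 0 then Pr'({(r₁,m₁)}) · Pr({r₂}) = Pr'({(r₂,m₂)}) · Pr({r₁}). In particular, Pr^Elga_{(r,m)} assigns equal probability to all points of K(r,m) lying on the same run. -/
import Mathlib


open scoped Classical

namespace SBP

variable {L : Type*}

/-- A point: a run together with a time. -/
abbrev Point (L : Type*) := (ℕ → L) × ℕ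

/-- The information set `K(r,m)`: all points `(r',m')` with `r' ∈ ℛ` and `r' m' = r m`. -/
def K (ℛ : Finset (ℕ → L)) (r : ℕ → L) (m : ℕ) : Set (Point L) :=
  {p | p.1 ∈ ℛ ∧ p.1 p.2 = r m}

/-- `ℛ(U)`: the runs of `ℛ` passing through some point of `U`. -/
noncomputable def runsOf (ℛ : Finset (ℕ → L)) (U : Set (Point L)) : Finset (ℕ → L) :=
  ℛ.filter fun r' => ∃ m', (r', m') ∈ U

/-- A system is synchronous if indistinguishable points occur at the same time. -/
def Synchronous (ℛ : Finset (ℕ → L)) : Prop :=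
  ∀ r ∈ ℛ, ∀ r' ∈ ℛ, ∀ m m' : ℕ, r m = r' m' → m = m'

/-- The local-state sequence of run `r` at time `m`:
`r 0, r 1, …, r m` with consecutive repetitions removed. -/
noncomputable def lseq (r : ℕ → L) (m : ℕ) : List L :=
  ((List.range (m + 1)).map r).destutter (· ≠ ·)

/-- Perfect recall: indistinguishable points have the same local-state sequence. -/
def PerfectRecall (ℛ : Finset (ℕ → L)) : Prop :=
  ∀ r ∈ ℛ, ∀ r' ∈ ℛ, ∀ m m' : ℕ, r m = r' m' → lseq r m = lseq r' m'

/-- A run-based event: contains all points of a run or none of them. -/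
def RunBased (U : Set (Point L)) : Prop :=
  ∀ (r' : ℕ → L) (k k' : ℕ), (r', k) ∈ U → (r', k') ∈ U

/-- The probability of a (finite) set of runs. -/
noncomputable def PrS (pr : (ℕ → L) → ℝ) (S : Finset (ℕ → L)) : ℝ := ∑ r ∈ S, pr r

/-- `n_{(r,m)}(r')`: the number of points of the information set `K(r,m)` lying on run `r'`. -/
noncomputable def npts (r : ℕ → L) (m : ℕ) (r' : ℕ → L) : ℕ :=
  Nat.card {k : ℕ | r' k = r m}

/-- The Elga probability of a single point, for the agent at the point `(r,m)`. -/
noncomputable def elga (ℛ : Finset (ℕ → L)) (pr : (ℕ → L) → ℝ) (r : ℕ → L) (m : ℕ)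
    (p : Point L) : ℝ :=
  if p ∈ K ℛ r m then
    pr p.1 / ∑ r'' ∈ runsOf ℛ (K ℛ r m), pr r'' * (npts r m r'' : ℝ)
  else 0

/-- `Pr^Elga_{(r,m)}` is the unique probability measure on the points of `K(r,m)`
satisfying the proportionality condition
`Pr'({(r₁,m₁)}) · Pr({r₂}) = Pr'({(r₂,m₂)}) · Pr({r₁})` (whenever `Pr({r₂}) > 0`);
in particular it assigns equal probability to all points of `K(r,m)` on the same run. -/
theorem elga_unique (ℛ : Finset (ℕ → L)) (hne : ℛ.Nonempty)
    (pr : (ℕ → L) → ℝ) (hnn : ∀ r' ∈ ℛ, 0 ≤ pr r') (hsum : ∑ r' ∈ ℛ, pr r' = 1)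
    (hfin : ∀ r' ∈ ℛ, ∀ s ∈ ℛ, ∀ m : ℕ, {k : ℕ | r' k = s m}.Finite)
    (r : ℕ → L) (hr : r ∈ ℛ) (m : ℕ)
    (hpos : 0 < PrS pr (runsOf ℛ (K ℛ r m))) :
    (∀ p : Point L, 0 ≤ elga ℛ pr r m p) ∧
    (∀ p : Point L, p ∉ K ℛ r m → elga ℛ pr r m p = 0) ∧
    (∑ᶠ p : Point L, elga ℛ pr r m p) = 1 ∧
    (∀ p₁ ∈ K ℛ r m, ∀ p₂ ∈ K ℛ r m, 0 < pr p₂.1 →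
        elga ℛ pr r m p₁ * pr p₂.1 = elga ℛ pr r m p₂ * pr p₁.1) ∧
    (∀ q : Point L → ℝ,
        (∀ p : Point L, 0 ≤ q p) →
        (∀ p : Point L, p ∉ K ℛ r m → q p = 0) →
        (∑ᶠ p : Point L, q p) = 1 →
        (∀ p₁ ∈ K ℛ r m, ∀ p₂ ∈ K ℛ r m, 0 < pr p₂.1 →
            q p₁ * pr p₂.1 = q p₂ * pr p₁.1) →
        q = elga ℛ pr r m) ∧
    (∀ (r' : ℕ → L) (m₁ m₂ : ℕ), (r', m₁) ∈ K ℛ r m → (r', m₂) ∈ K ℛ r m →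
        elga ℛ pr r m (r', m₁) = elga ℛ pr r m (r', m₂)) := by
  classical
  -- finiteness of the information set
  have hK : (K ℛ r m).Finite := by
    have hsub : K ℛ r m ⊆ ⋃ r' ∈ (ℛ : Set (ℕ → L)), (fun k => (r', k)) '' {k | r' k = r m} := by
      rintro ⟨r', k⟩ ⟨h1, h2⟩
      exact Set.mem_biUnion h1 ⟨k, h2, rfl⟩
    refine Set.Finite.subset ?_ hsub
    exact Set.Finite.biUnion ℛ.finite_toSet fun r' hr' => (hfin r' hr' r hr m).image _
  set KF := hK.toFinset with hKFdef
  have hmemKF : ∀ p : Point L, p ∈ KF ↔ p ∈ K ℛ r m := fun p => hK.mem_toFinset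
  set D := ∑ r'' ∈ runsOf ℛ (K ℛ r m), pr r'' * (npts r m r'' : ℝ) with hD
  have hrunsub : ∀ r'' ∈ runsOf ℛ (K ℛ r m), r'' ∈ ℛ :=
    fun r'' h => (Finset.mem_filter.mp h).1
  have hnpts_pos : ∀ r'' ∈ runsOf ℛ (K ℛ r m), 1 ≤ (npts r m r'' : ℝ) := by
    intro r'' h
    obtain ⟨hmem, m'', hK''⟩ := Finset.mem_filter.mp h
    have hf := hfin r'' hmem r hr m
    have h1 : 0 < ({k | r'' k = r m} : Set ℕ).ncard := (Set.ncard_pos hf).2 ⟨m'', hK''.2⟩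
    have h2 : 0 < npts r m r'' := by rwa [npts, Nat.card_coe_set_eq]
    exact_mod_cast h2
  have hDpos : 0 < D := by
    have hle : PrS pr (runsOf ℛ (K ℛ r m)) ≤ D := by
      rw [hD, PrS]
      refine Finset.sum_le_sum fun r'' h => ?_
      exact le_mul_of_one_le_right (hnn r'' (hrunsub r'' h)) (hnpts_pos r'' h)
    linarith
  -- counting points on a run
  have hcount : ∀ r'' ∈ runsOf ℛ (K ℛ r m),
      ((KF.filter fun p => p.1 = r'').card : ℝ) = (npts r m r'' : ℝ) := by
    intro r'' h
    have hmem := hrunsub r'' h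
    have hf := hfin r'' hmem r hr m
    have himg : KF.filter (fun p => p.1 = r'') = hf.toFinset.image (fun k => (r'', k)) := by
      ext ⟨s, k⟩
      simp only [Finset.mem_filter, hmemKF, Finset.mem_image, Set.Finite.mem_toFinset, K,
        Set.mem_setOf_eq, Prod.mk.injEq]
      constructor
      · rintro ⟨⟨hs, hk⟩, rfl⟩; exact ⟨k, hk, rfl, rfl⟩
      · rintro ⟨k', hk', rfl, rfl⟩; exact ⟨⟨hmem, hk'⟩, rfl⟩
    have hinj : Function.Injective (fun k : ℕ => ((r'', k) : Point L)) := by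
      intro a b hab; simpa using hab
    have hcard : (KF.filter fun p => p.1 = r'').card = hf.toFinset.card := by
      rw [himg, Finset.card_image_of_injective _ hinj]
    have hnp : npts r m r'' = hf.toFinset.card := by
      rw [npts, Nat.card_coe_set_eq, Set.ncard_eq_toFinset_card _ hf]
    rw [hcard, hnp]
  -- double counting
  have hsumK : ∑ p ∈ KF, pr p.1 = D := by
    have hmap : ∀ p ∈ KF, p.1 ∈ runsOf ℛ (K ℛ r m) := by
      intro p hp
      have hpK := (hmemKF p).mp hp
      exact Finset.mem_filter.mpr ⟨hpK.1, p.2, hpK⟩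
    rw [hD, ← Finset.sum_fiberwise_of_maps_to hmap (fun p => pr p.1)]
    refine Finset.sum_congr rfl fun r'' h => ?_
    calc ∑ p ∈ KF.filter (fun p => p.1 = r''), pr p.1
        = ∑ p ∈ KF.filter (fun p => p.1 = r''), pr r'' := by
          refine Finset.sum_congr rfl fun p hp => ?_
          rw [(Finset.mem_filter.mp hp).2]
      _ = pr r'' * (npts r m r'' : ℝ) := by
          rw [Finset.sum_const, nsmul_eq_mul, hcount r'' h, mul_comm]
  have helga : ∀ p ∈ K ℛ r m, elga ℛ pr r m p = pr p.1 / D := fun p hp => if_pos hp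
  have helga0 : ∀ p : Point L, p ∉ K ℛ r m → elga ℛ pr r m p = 0 := fun p hp => if_neg hp
  have hnonneg : ∀ p : Point L, 0 ≤ elga ℛ pr r m p := by
    intro p
    by_cases hp : p ∈ K ℛ r m
    · rw [helga p hp]; exact div_nonneg (hnn p.1 hp.1) hDpos.le
    · rw [helga0 p hp]
  have hsupp : Function.support (elga ℛ pr r m) ⊆ ↑KF := by
    intro p hp
    rw [Function.mem_support] at hp
    rw [Finset.mem_coe, hmemKF]
    by_contra h
    exact hp (helga0 p h)
  have hsum1 : (∑ᶠ p : Point L, elga ℛ pr r m p) = 1 := by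
    rw [finsum_eq_finset_sum_of_support_subset _ hsupp]
    calc ∑ p ∈ KF, elga ℛ pr r m p = ∑ p ∈ KF, pr p.1 / D := by
          refine Finset.sum_congr rfl fun p hp => helga p ((hmemKF p).mp hp)
      _ = (∑ p ∈ KF, pr p.1) / D := by rw [Finset.sum_div]
      _ = 1 := by rw [hsumK]; exact div_self hDpos.ne'
  refine ⟨hnonneg, helga0, hsum1, ?_, ?_, ?_⟩
  · intro p₁ h₁ p₂ h₂ _
    rw [helga p₁ h₁, helga p₂ h₂]
    ring
  · intro q hq0 hqK hq1 hqprop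
    obtain ⟨r₀, hr₀mem, hr₀pos⟩ : ∃ r₀ ∈ runsOf ℛ (K ℛ r m), 0 < pr r₀ := by
      by_contra h
      push_neg at h
      have : PrS pr (runsOf ℛ (K ℛ r m)) ≤ 0 := Finset.sum_nonpos fun r'' hr'' => h r'' hr''
      linarith
    obtain ⟨hr₀ℛ, m₀, hm₀⟩ := Finset.mem_filter.mp hr₀mem
    funext p
    by_cases hp : p ∈ K ℛ r m
    · rcases (hnn p.1 hp.1).lt_or_eq with hppos | hpzero
      · -- positive case
        have hqsupp : Function.support q ⊆ ↑KF := by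
          intro p' hp'
          rw [Function.mem_support] at hp'
          rw [Finset.mem_coe, hmemKF]
          by_contra h
          exact hp' (hqK p' h)
        have hqs : ∑ p' ∈ KF, q p' = 1 := by
          rw [← finsum_eq_finset_sum_of_support_subset _ hqsupp]; exact hq1
        have hkey : (∑ p' ∈ KF, q p') * pr p.1 = q p * D := by
          rw [Finset.sum_mul, ← hsumK, Finset.mul_sum]
          refine Finset.sum_congr rfl fun p' hp' => ?_
          exact hqprop p' ((hmemKF p').mp hp') p hp hppos
        rw [hqs, one_mul] at hkey
        rw [helga p hp]
        rw [hkey]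
        field_simp
      · -- pr p.1 = 0
        have h1 := hqprop p hp (r₀, m₀) hm₀ hr₀pos
        rw [← hpzero, mul_zero] at h1
        have hq0' : q p = 0 := by
          rcases mul_eq_zero.mp h1 with h | h
          · exact h
          · exact absurd h hr₀pos.ne'
        rw [hq0', helga p hp, ← hpzero, zero_div]
    · rw [hqK p hp, helga0 p hp]
  · intro r' m₁ m₂ h₁ h₂
    rw [helga _ h₁, helga _ h₂]


end SBP
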